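/- Let H₀ be a bounded self-adjoint operator on ℓ²(ℤᵈ) and Λ ⊆ ℤᵈ. For every z ∈ ℂ with Im z ≠ 0, the restricted free resolvent G₀^Λ(z) = Π(z − H₀)⁻¹Π* is invertible in the bounded operators on ℓ²(Λ). -/

import Mathlib

noncomputable section

open ContinuousLinearMap

variable {E F : Type*} [NormedAddCommGroup E] [InnerProductSpace ℂ E] [CompleteSpace E]
  [NormedAddCommGroup F] [InnerProductSpace ℂ F] [CompleteSpace F]

local notation "⟪" x ", " y "⟫" => @inner ℂ _ _ x y

/-- Key quantitative bound. -/
lemma key_bound (H₀ : E →L[ℂ] E) (hH₀ : IsSelfAdjoint H₀)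
    (Φ : E →L[ℂ] F) (hΦcoiso : Φ ∘L ContinuousLinearMap.adjoint Φ = 1)
    (z : ℂ) (hA : IsUnit (z • (1 : E →L[ℂ] E) - H₀)) (g : F) :
    |z.im| * ‖g‖ ^ 2 ≤
      ‖z • (1 : E →L[ℂ] E) - H₀‖ ^ 2 *
        (‖(Φ ∘L Ring.inverse (z • 1 - H₀) ∘L ContinuousLinearMap.adjoint Φ) g‖ * ‖g‖) := by
  set A : E →L[ℂ] E := z • 1 - H₀ with hAdef
  set R : E →L[ℂ] E := Ring.inverse A with hR
  set f : E := ContinuousLinearMap.adjoint Φ g with hf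
  set u : E := R f with hu
  have hAu : A u = f := by
    have : A * R = 1 := Ring.mul_inverse_cancel A hA
    have := congrArg (fun (S : E →L[ℂ] E) => S f) this
    simpa [ContinuousLinearMap.mul_apply] using this
  -- norm of f equals norm of g
  have hfg : ‖f‖ = ‖g‖ := by
    have h1 : ⟪f, f⟫ = ⟪g, g⟫ := by
      rw [hf, ContinuousLinearMap.adjoint_inner_left]
      have := congrArg (fun (S : F →L[ℂ] F) => S g) hΦcoiso
      simp only [ContinuousLinearMap.comp_apply, ContinuousLinearMap.one_apply] at this
      rw [this]
    rw [inner_self_eq_norm_sq_to_K, inner_self_eq_norm_sq_to_K] at h1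
    have h2 : ‖f‖ ^ 2 = ‖g‖ ^ 2 := by exact_mod_cast h1
    nlinarith [norm_nonneg f, norm_nonneg g]
  -- inner product identity
  have hinner : ⟪g, (Φ ∘L R ∘L ContinuousLinearMap.adjoint Φ) g⟫ = ⟪f, u⟫ := by
    simp only [ContinuousLinearMap.comp_apply]
    rw [← hf, ← hu, ← ContinuousLinearMap.adjoint_inner_left Φ]
  -- imaginary part of ⟪f, u⟫ = ⟪A u, u⟫
  have hHreal : (⟪H₀ u, u⟫).im = 0 := by
    have hsym := hH₀.isSymmetric u u
    simp only [ContinuousLinearMap.coe_coe] at hsym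
    have : ⟪H₀ u, u⟫ = starRingEnd ℂ ⟪H₀ u, u⟫ := by
      rw [hsym, inner_conj_symm]
      exact hsym.symm
    have him := congrArg Complex.im this
    simp only [Complex.conj_im] at him
    linarith
  have hAuu : (⟪f, u⟫).im = -z.im * ‖u‖ ^ 2 := by
    rw [← hAu]
    have : ⟪A u, u⟫ = (starRingEnd ℂ z) * ⟪u, u⟫ - ⟪H₀ u, u⟫ := by
      simp [hAdef, ContinuousLinearMap.sub_apply, ContinuousLinearMap.smul_apply,
        inner_sub_left, inner_smul_left]
      ring
    rw [this]
    have huu : ⟪u, u⟫ = (‖u‖ ^ 2 : ℝ) := by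
      rw [inner_self_eq_norm_sq_to_K]; norm_num
    rw [huu]
    simp [Complex.sub_im, Complex.mul_im, hHreal, ← Complex.ofReal_pow,
      Complex.ofReal_im, Complex.ofReal_re, Complex.conj_im, Complex.conj_re]
  -- lower bound on ‖u‖
  have hfu : ‖f‖ ≤ ‖A‖ * ‖u‖ := by rw [← hAu]; exact A.le_opNorm u
  -- chain
  have h1 : |z.im| * ‖g‖ ^ 2 = |z.im| * ‖f‖ ^ 2 := by rw [hfg]
  have h2 : |z.im| * ‖f‖ ^ 2 ≤ ‖A‖ ^ 2 * (|z.im| * ‖u‖ ^ 2) := by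
    have hsq : ‖f‖ ^ 2 ≤ ‖A‖ ^ 2 * ‖u‖ ^ 2 :=
      by nlinarith [hfu, norm_nonneg f, norm_nonneg u, norm_nonneg A]
    nlinarith [abs_nonneg z.im, hsq]
  have h3 : |z.im| * ‖u‖ ^ 2 = |(⟪g, (Φ ∘L R ∘L ContinuousLinearMap.adjoint Φ) g⟫).im| := by
    rw [hinner, hAuu]
    rw [abs_mul, abs_neg, abs_of_nonneg (by positivity : (0:ℝ) ≤ ‖u‖ ^ 2)]
  have h4 : |(⟪g, (Φ ∘L R ∘L ContinuousLinearMap.adjoint Φ) g⟫).im| ≤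
      ‖(Φ ∘L R ∘L ContinuousLinearMap.adjoint Φ) g‖ * ‖g‖ := by
    calc |(⟪g, (Φ ∘L R ∘L ContinuousLinearMap.adjoint Φ) g⟫).im|
        ≤ ‖⟪g, (Φ ∘L R ∘L ContinuousLinearMap.adjoint Φ) g⟫‖ := by
          exact Complex.abs_im_le_norm _
      _ ≤ ‖g‖ * ‖(Φ ∘L R ∘L ContinuousLinearMap.adjoint Φ) g‖ := norm_inner_le_norm _ _
      _ = _ := mul_comm _ _
  calc |z.im| * ‖g‖ ^ 2 = |z.im| * ‖f‖ ^ 2 := h1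
    _ ≤ ‖A‖ ^ 2 * (|z.im| * ‖u‖ ^ 2) := h2
    _ ≤ ‖A‖ ^ 2 * (‖(Φ ∘L R ∘L ContinuousLinearMap.adjoint Φ) g‖ * ‖g‖) := by
        rw [h3] at *
        exact mul_le_mul_of_nonneg_left h4 (by positivity)

/-- An endomorphism of a Hilbert space bounded below together with its adjoint is invertible. -/
lemma isUnit_of_bddBelow (T : F →L[ℂ] F) (c : ℝ) (hc : 0 < c)
    (h1 : ∀ g, c * ‖g‖ ≤ ‖T g‖)
    (h2 : ∀ g, c * ‖g‖ ≤ ‖ContinuousLinearMap.adjoint T g‖) : IsUnit T := by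
  have hinj : T.ker = ⊥ := by
    rw [LinearMap.ker_eq_bot']
    intro g hg
    have := h1 g
    rw [show T g = 0 from hg, norm_zero] at this
    have : ‖g‖ ≤ 0 := by nlinarith
    simpa using le_antisymm this (norm_nonneg g)
  -- closed range
  have hanti : AntilipschitzWith (⟨c⁻¹, by positivity⟩ : NNReal) T :=
    T.antilipschitz_of_bound (fun x => by
      have := h1 x
      have hcx : ‖x‖ ≤ c⁻¹ * ‖T x‖ := by
        rw [le_inv_mul_iff₀ hc]; exact this
      exact hcx)
  have hclosed : IsClosed (Set.range T) := hanti.isClosed_range T.uniformContinuous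
  have hclosedsub : IsClosed ((T.range : Submodule ℂ F) : Set F) := by
    simpa [LinearMap.coe_range] using hclosed
  have : CompleteSpace (T.range : Submodule ℂ F) := hclosedsub.completeSpace_coe
  have hsurj : T.range = ⊤ := by
    rw [← Submodule.orthogonal_eq_bot_iff]
    rw [Submodule.eq_bot_iff]
    intro v hv
    have hTv : ContinuousLinearMap.adjoint T v = 0 := by
      have horth : ∀ g : F, ⟪T g, v⟫ = 0 := fun g =>
        (Submodule.mem_orthogonal _ _).mp hv (T g) (LinearMap.mem_range_self _ g)
      have : ⟪ContinuousLinearMap.adjoint T v, ContinuousLinearMap.adjoint T v⟫ = 0 := by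
        rw [ContinuousLinearMap.adjoint_inner_right]
        exact horth _
      exact inner_self_eq_zero.mp this
    have := h2 v
    rw [hTv, norm_zero] at this
    have : ‖v‖ ≤ 0 := by nlinarith
    simpa using le_antisymm this (norm_nonneg v)
  let e : F ≃L[ℂ] F := ContinuousLinearEquiv.ofBijective T hinj hsurj
  have he : ⇑e = ⇑T := ContinuousLinearEquiv.coeFn_ofBijective T hinj hsurj
  refine ⟨⟨T, (e.symm : F →L[ℂ] F), ?_, ?_⟩, rfl⟩
  · ext x
    simp only [ContinuousLinearMap.mul_apply, ContinuousLinearMap.one_apply,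
      ContinuousLinearEquiv.coe_coe]
    rw [← he]
    exact e.apply_symm_apply x
  · ext x
    simp only [ContinuousLinearMap.mul_apply, ContinuousLinearMap.one_apply,
      ContinuousLinearEquiv.coe_coe]
    rw [← he]
    exact e.symm_apply_apply x

set_option maxHeartbeats 1000000 in
theorem stmt7 (d : ℕ) (Λ : Set (Fin d → ℤ))
    (H₀ : lp (fun _ : Fin d → ℤ => ℂ) 2 →L[ℂ] lp (fun _ : Fin d → ℤ => ℂ) 2)
    (hH₀ : IsSelfAdjoint H₀)
    (Φ : lp (fun _ : Fin d → ℤ => ℂ) 2 →L[ℂ] lp (fun _ : Λ => ℂ) 2)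
    (hΦ : ∀ (f : lp (fun _ : Fin d → ℤ => ℂ) 2) (n : Λ), (Φ f) n = f n)
    (hΦcoiso : Φ ∘L ContinuousLinearMap.adjoint Φ = 1)
    (z : ℂ) (hz : z.im ≠ 0) :
    IsUnit (Φ ∘L Ring.inverse (z • 1 - H₀) ∘L ContinuousLinearMap.adjoint Φ) := by
  set E := lp (fun _ : Fin d → ℤ => ℂ) 2
  set F := lp (fun _ : Λ => ℂ) 2
  set A : E →L[ℂ] E := z • 1 - H₀ with hAdef
  -- A is invertible since spectrum of self-adjoint is real
  have hA : IsUnit A := by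
    have hznot : z ∉ spectrum ℂ H₀ := fun hmem => hz (hH₀.im_eq_zero_of_mem_spectrum hmem)
    rw [spectrum.notMem_iff] at hznot
    rwa [Algebra.algebraMap_eq_smul_one] at hznot
  set T : F →L[ℂ] F := Φ ∘L Ring.inverse A ∘L ContinuousLinearMap.adjoint Φ with hT
  by_cases hF : ∀ g : F, g = 0
  · have hsub : Subsingleton F := ⟨fun a b => by rw [hF a, hF b]⟩
    have : T = 1 := Subsingleton.elim _ _
    rw [this]; exact isUnit_one
  · push_neg at hF
    obtain ⟨g₀, hg₀⟩ := hF
    have hg₀n : 0 < ‖g₀‖ := norm_pos_iff.mpr hg₀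
    -- ‖A‖ > 0
    have hAn : 0 < ‖A‖ := by
      by_contra h
      push_neg at h
      have hA0 : ‖A‖ = 0 := le_antisymm h (norm_nonneg _)
      have := key_bound H₀ hH₀ Φ hΦcoiso z hA g₀
      rw [← hAdef, hA0] at this
      norm_num at this
      have hzim : 0 < |z.im| := abs_pos.mpr hz
      nlinarith [mul_pos hzim (pow_pos hg₀n 2)]
    set c : ℝ := |z.im| / ‖A‖ ^ 2 with hc
    have hcpos : 0 < c := by positivity
    -- the adjoint of T
    have hTadj : ContinuousLinearMap.adjoint T =
        Φ ∘L Ring.inverse ((starRingEnd ℂ z) • 1 - H₀) ∘L ContinuousLinearMap.adjoint Φ := by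
      rw [hT, ContinuousLinearMap.adjoint_comp, ContinuousLinearMap.adjoint_comp,
        ContinuousLinearMap.adjoint_adjoint]
      have hstarA : star A = (starRingEnd ℂ z) • 1 - H₀ := by
        rw [hAdef, star_sub, star_smul, star_one, hH₀.star_eq]
        rfl
      have hRstar : ContinuousLinearMap.adjoint (Ring.inverse A) =
          Ring.inverse ((starRingEnd ℂ z) • 1 - H₀) := by
        rw [← ContinuousLinearMap.star_eq_adjoint, ← Ring.inverse_star, hstarA]
      rw [hRstar, ContinuousLinearMap.comp_assoc]
    have hstarAeq : (starRingEnd ℂ z) • (1 : E →L[ℂ] E) - H₀ = star A := by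
      rw [hAdef, star_sub, star_smul, star_one, hH₀.star_eq]; rfl
    have hstarAunit : IsUnit ((starRingEnd ℂ z) • (1 : E →L[ℂ] E) - H₀) := by
      rw [hstarAeq]; exact hA.star
    -- bounds
    have hb1 : ∀ g : F, c * ‖g‖ ≤ ‖T g‖ := by
      intro g
      rcases eq_or_ne g 0 with rfl | hg
      · simp
      · have hgp : 0 < ‖g‖ := norm_pos_iff.mpr hg
        have hk := key_bound H₀ hH₀ Φ hΦcoiso z hA g
        rw [← hAdef, ← hT] at hk
        rw [hc, div_mul_eq_mul_div, div_le_iff₀ (by positivity)]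
        nlinarith
    have hb2 : ∀ g : F, c * ‖g‖ ≤ ‖ContinuousLinearMap.adjoint T g‖ := by
      intro g
      rcases eq_or_ne g 0 with rfl | hg
      · simp
      · have hgp : 0 < ‖g‖ := norm_pos_iff.mpr hg
        have hk := key_bound H₀ hH₀ Φ hΦcoiso (starRingEnd ℂ z) hstarAunit g
        rw [← hTadj] at hk
        rw [hstarAeq, norm_star] at hk
        have him : |(starRingEnd ℂ z).im| = |z.im| := by
          simp [Complex.conj_im]
        rw [him] at hk
        rw [hc, div_mul_eq_mul_div, div_le_iff₀ (by positivity)]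
        nlinarith
    exact isUnit_of_bddBelow T c hcpos hb1 hb2
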